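/- Let n be a positive integer and s an integer such that n does not divide 4s. Then V_s is a two-dimensional irreducible invariant subspace for the regular representation of the dihedral quandle R_n: every ℂ-subspace U ⊆ V_s satisfying λ_t(U) ⊆ U for all t ∈ ZMod n equals {0} or V_s. -/

import Mathlib

/-- The regular representation of the dihedral quandle `R_n = Quandle.dihedral n`
(`ZMod n` with `x ◃ y = 2y - x`) on functions `ZMod n → ℂ`:
`(λ_t f)(x) = f (2t - x)`. -/
def lam (n : ℕ) (t : ZMod n) (f : ZMod n → ℂ) : ZMod n → ℂ :=
  fun x => f (2 * t - x)

/-- `ω = exp(2πi/n)`. -/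
noncomputable def dihedralOmega (n : ℕ) : ℂ :=
  Complex.exp (2 * Real.pi * Complex.I / n)

/-- The character `f_s : ZMod n → ℂ`, `f_s(x) = ω^{s·x.val}`. -/
noncomputable def chi (n : ℕ) (s : ℤ) : ZMod n → ℂ :=
  fun x => dihedralOmega n ^ (s * (x.val : ℤ))

/-- `V_s`: the `ℂ`-linear span of `{f_s, f_{-s}}` in `ZMod n → ℂ`. -/
noncomputable def Vsub (n : ℕ) (s : ℤ) : Submodule ℂ (ZMod n → ℂ) :=
  Submodule.span ℂ {chi n s, chi n (-s)}

lemma omega_ne_zero (n : ℕ) : dihedralOmega n ≠ 0 := Complex.exp_ne_zero _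

lemma omega_zpow_eq_one_iff {n : ℕ} (hpos : 0 < n) (k : ℤ) :
    dihedralOmega n ^ k = 1 ↔ (n : ℤ) ∣ k := by
  have hn : (n : ℂ) ≠ 0 := Nat.cast_ne_zero.mpr hpos.ne'
  have h2 : (2 * Real.pi * Complex.I : ℂ) ≠ 0 := by
    simp [Real.pi_ne_zero, Complex.I_ne_zero]
  rw [dihedralOmega, ← Complex.exp_int_mul, Complex.exp_eq_one_iff]
  constructor
  · rintro ⟨m, hm⟩
    refine ⟨m, ?_⟩
    field_simp at hm
    have hm' : (k : ℂ) * (2 * Real.pi * Complex.I) = (m * n) * (2 * Real.pi * Complex.I) := by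
      rw [hm]; ring
    have : (k : ℂ) = (m : ℂ) * n := mul_right_cancel₀ h2 hm'
    exact_mod_cast this.trans (mul_comm _ _)
  · rintro ⟨m, hm⟩
    refine ⟨m, ?_⟩
    subst hm
    push_cast
    field_simp

lemma omega_zpow_congr {n : ℕ} (hpos : 0 < n) {j k : ℤ}
    (h : (j : ZMod n) = (k : ZMod n)) : dihedralOmega n ^ j = dihedralOmega n ^ k := by
  have hd : (n : ℤ) ∣ j - k := by
    have h' := Int.ModEq.dvd ((ZMod.intCast_eq_intCast_iff _ _ _).mp h)
    exact dvd_sub_comm.mp h'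
  have h1 : dihedralOmega n ^ (j - k) = 1 := (omega_zpow_eq_one_iff hpos _).mpr hd
  calc dihedralOmega n ^ j = dihedralOmega n ^ (j - k) * dihedralOmega n ^ k := by
        rw [← zpow_add₀ (omega_ne_zero n)]; ring_nf
    _ = dihedralOmega n ^ k := by rw [h1, one_mul]

lemma lam_chi {n : ℕ} (hpos : 0 < n) (s : ℤ) (t : ZMod n) :
    lam n t (chi n s) = (dihedralOmega n ^ (2 * s * (t.val : ℤ))) • chi n (-s) := by
  haveI : NeZero n := ⟨hpos.ne'⟩
  funext x
  show dihedralOmega n ^ (s * ((2 * t - x).val : ℤ))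
      = dihedralOmega n ^ (2 * s * (t.val : ℤ)) * dihedralOmega n ^ ((-s) * (x.val : ℤ))
  rw [← zpow_add₀ (omega_ne_zero n)]
  apply omega_zpow_congr hpos
  push_cast [ZMod.natCast_val, ZMod.intCast_cast, ZMod.cast_id]
  ring

lemma lam_comb (n : ℕ) (t : ZMod n) (c d : ℂ) (f1 f2 : ZMod n → ℂ) :
    lam n t (c • f1 + d • f2) = c • lam n t f1 + d • lam n t f2 := rfl

/-- If `n` does not divide `4s`, then `V_s` is a two-dimensional irreducible
invariant subspace of the regular representation of the dihedral quandle `R_n`: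
every subspace `U ⊆ V_s` invariant under all `λ_t` is `⊥` or `V_s`. -/
theorem Vs_irreducible (n : ℕ) (s : ℤ) (hpos : 0 < n) (hndvd : ¬ ((n : ℤ) ∣ 4 * s)) :
    Module.finrank ℂ (Vsub n s) = 2 ∧
    (∀ U : Submodule ℂ (ZMod n → ℂ), U ≤ Vsub n s →
      (∀ t : ZMod n, ∀ f ∈ U, lam n t f ∈ U) → U = ⊥ ∨ U = Vsub n s) := by
  haveI : NeZero n := ⟨hpos.ne'⟩
  have hn1 : 1 < n := by
    by_contra h
    push_neg at h
    have hn : n = 1 := le_antisymm h hpos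
    subst hn
    exact hndvd (one_dvd _)
  haveI : Fact (1 < n) := ⟨hn1⟩
  set ω := dihedralOmega n with hωdef
  have hω0 : ω ≠ 0 := omega_ne_zero n
  have h4s : ω ^ (4 * s) ≠ 1 := fun h => hndvd ((omega_zpow_eq_one_iff hpos _).mp h)
  have h2s : ω ^ (2 * s) ≠ 1 := by
    intro h
    apply hndvd
    have := (omega_zpow_eq_one_iff hpos _).mp h
    have : (n : ℤ) ∣ 2 * (2 * s) := this.mul_left 2
    simpa [show (2 : ℤ) * (2 * s) = 4 * s by ring] using this
  set μ := ω ^ (2 * s) with hμdef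
  have hμ0 : μ ≠ 0 := zpow_ne_zero _ hω0
  have hμsq : μ * μ ≠ 1 := by
    rw [hμdef, ← zpow_add₀ hω0]
    simpa [show (2 : ℤ) * s + 2 * s = 4 * s by ring] using h4s
  have hμinv : μ - μ⁻¹ ≠ 0 := by
    intro h
    apply hμsq
    have hinv : μ = μ⁻¹ := sub_eq_zero.mp h
    calc μ * μ = μ⁻¹ * μ := by rw [← hinv]
      _ = 1 := inv_mul_cancel₀ hμ0
  -- action formulas
  have hμs : lam n 1 (chi n s) = μ • chi n (-s) := by
    rw [lam_chi hpos s 1, ZMod.val_one]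
    norm_num
    rfl
  have hμs' : lam n 1 (chi n (-s)) = μ⁻¹ • chi n s := by
    rw [lam_chi hpos (-s) 1, ZMod.val_one, neg_neg]
    rw [show (2 : ℤ) * -s * (1 : ℕ) = -(2 * s) by push_cast; ring, zpow_neg]
  have h0s : lam n 0 (chi n s) = chi n (-s) := by
    rw [lam_chi hpos s 0, ZMod.val_zero]
    norm_num
  have h0s' : lam n 0 (chi n (-s)) = chi n s := by
    rw [lam_chi hpos (-s) 0, ZMod.val_zero, neg_neg]
    norm_num
  -- linear independence
  have hne : ω ^ s - ω ^ (-s) ≠ 0 := by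
    intro h
    apply h2s
    have heq : ω ^ s = ω ^ (-s) := sub_eq_zero.mp h
    calc ω ^ (2 * s) = ω ^ s * ω ^ s := by
          rw [← zpow_add₀ hω0]; ring_nf
      _ = ω ^ (-s) * ω ^ s := by rw [heq]
      _ = 1 := by rw [← zpow_add₀ hω0]; simp
  have hli : LinearIndependent ℂ ![chi n s, chi n (-s)] := by
    rw [LinearIndependent.pair_iff]
    intro a b hab
    have h0 := congrFun hab 0
    have h1 := congrFun hab 1
    simp only [chi, Pi.add_apply, Pi.smul_apply, smul_eq_mul, Pi.zero_apply,
      ZMod.val_zero, ZMod.val_one, Nat.cast_zero, Nat.cast_one, mul_zero, mul_one,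
      zpow_zero] at h0 h1
    -- h0 : a * 1 + b * 1 = 0 ; h1 : a * ω ^ s + b * ω ^ (-s) = 0
    have hb : b = -a := by linear_combination h0
    rw [hb] at h1
    have ha : a * (ω ^ s - ω ^ (-s)) = 0 := by linear_combination h1
    have ha0 : a = 0 := by
      rcases mul_eq_zero.mp ha with h | h
      · exact h
      · exact absurd h hne
    exact ⟨ha0, by rw [hb, ha0, neg_zero]⟩
  constructor
  · have hr : Set.range ![chi n s, chi n (-s)] = {chi n s, chi n (-s)} := by
      simp [Matrix.range_cons, Matrix.range_empty, Set.pair_comm]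
    have hfr := finrank_span_eq_card hli
    rw [hr] at hfr
    rw [Vsub]
    convert hfr using 1
    simp
  · intro U hUle hUinv
    by_cases hU : U = ⊥
    · exact Or.inl hU
    right
    obtain ⟨g, hgU, hg0⟩ := Submodule.exists_mem_ne_zero_of_ne_bot hU
    obtain ⟨a, b, hab⟩ := Submodule.mem_span_pair.mp (hUle hgU)
    -- key computation
    have e1 : lam n 0 (lam n 1 g) = (a * μ) • chi n s + (b * μ⁻¹) • chi n (-s) := by
      rw [← hab, lam_comb, hμs, hμs', smul_smul, smul_smul, lam_comb, h0s, h0s']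
    have hkey : (b * (μ - μ⁻¹)) • chi n (-s) ∈ U := by
      have hmem : μ • g - lam n 0 (lam n 1 g) ∈ U :=
        Submodule.sub_mem _ (Submodule.smul_mem _ _ hgU) (hUinv 0 _ (hUinv 1 g hgU))
      have heq : μ • g - lam n 0 (lam n 1 g) = (b * (μ - μ⁻¹)) • chi n (-s) := by
        rw [e1, ← hab]
        module
      rwa [heq] at hmem
    have main : chi n s ∈ U ∧ chi n (-s) ∈ U := by
      by_cases hb : b = 0
      · have ha : a ≠ 0 := by
          intro ha
          apply hg0
          rw [← hab, ha, hb, zero_smul, zero_smul, add_zero]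
        have hs_mem : chi n s ∈ U := by
          have : a⁻¹ • g ∈ U := Submodule.smul_mem _ _ hgU
          rwa [← hab, hb, zero_smul, add_zero, smul_smul, inv_mul_cancel₀ ha,
            one_smul] at this
        refine ⟨hs_mem, ?_⟩
        have := hUinv 0 _ hs_mem
        rwa [h0s] at this
      · have hc : b * (μ - μ⁻¹) ≠ 0 := mul_ne_zero hb hμinv
        have hns_mem : chi n (-s) ∈ U := by
          have : (b * (μ - μ⁻¹))⁻¹ • ((b * (μ - μ⁻¹)) • chi n (-s)) ∈ U :=
            Submodule.smul_mem _ _ hkey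
          rwa [smul_smul, inv_mul_cancel₀ hc, one_smul] at this
        refine ⟨?_, hns_mem⟩
        have := hUinv 0 _ hns_mem
        rwa [h0s'] at this
    apply le_antisymm hUle
    rw [Vsub, Submodule.span_le]
    simp only [Set.insert_subset_iff, Set.singleton_subset_iff, SetLike.mem_coe]
    exact ⟨main.1, main.2⟩
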